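/- Let μ > 0 and let i, j ∈ ℕ with 0 ≤ i < j ≤ μ. Suppose there exists n ∈ ℤ such that n + 1/4 > G_μ(i), G_μ(m) ≥ n − 3/4 for every integer m with i ≤ m ≤ j − 1, and n − 3/4 > G_μ(j) ≥ n − 7/4. Then T(G_μ + 3/4, i, j) ≥ ∫_i^j G_μ(t) dt + (j−i)/(2(2−Θ)) − 1/2, where Θ = Θ(i, j, μ). -/

import Mathlib

/-- The function `g(x) = (1/π)(√(1−x²) − x·arccos x)`. -/
noncomputable def g (x : ℝ) : ℝ := (1 / Real.pi) * (Real.sqrt (1 - x ^ 2) - x * Real.arccos x)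

/-- For `μ > 0`, `G_μ(x) = μ·g(x/μ)`. -/
noncomputable def G (μ x : ℝ) : ℝ := μ * g (x / μ)

/-- `Θ(i,j,μ) = (j−i)/(2μ·arccos(i/μ)·√(1−(i/μ)²))`. -/
noncomputable def Θ (i j μ : ℝ) : ℝ :=
  (j - i) / (2 * μ * Real.arccos (i / μ) * Real.sqrt (1 - (i / μ) ^ 2))

/-- The trapezoidal floor sum `T(f,a,b) = (1/2)⌊f(a)⌋ + Σ_{m=a+1}^{b−1} ⌊f(m)⌋ + (1/2)⌊f(b)⌋`. -/
noncomputable def trapT (f : ℝ → ℝ) (a b : ℤ) : ℝ :=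
  (1 / 2) * (⌊f (a : ℝ)⌋ : ℝ) + (∑ m ∈ Finset.Ioo a b, (⌊f (m : ℝ)⌋ : ℝ))
    + (1 / 2) * (⌊f (b : ℝ)⌋ : ℝ)

lemma g_cont : Continuous g := by
  unfold g
  exact continuous_const.mul (((Real.continuous_sqrt.comp (by continuity))).sub
    (continuous_id.mul Real.continuous_arccos))

lemma G_cont (μ : ℝ) : Continuous (G μ) := by
  unfold G
  exact continuous_const.mul (g_cont.comp (continuous_id.div_const μ))

lemma g_hasDerivAt {y : ℝ} (h1 : -1 < y) (h2 : y < 1) :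
    HasDerivAt g (-(Real.arccos y) / Real.pi) y := by
  have hy2 : (0:ℝ) < 1 - y ^ 2 := by nlinarith
  have hs : Real.sqrt (1 - y ^ 2) ≠ 0 := by positivity
  have hsub : HasDerivAt (fun x : ℝ => 1 - x ^ 2) (-(2*y)) y := by
    simpa using ((hasDerivAt_pow 2 y).const_sub 1)
  have hsqrt : HasDerivAt (fun x : ℝ => Real.sqrt (1 - x ^ 2))
      (1 / (2 * Real.sqrt (1 - y ^ 2)) * -(2*y)) y :=
    (Real.hasDerivAt_sqrt (ne_of_gt hy2)).comp y hsub
  have harccos : HasDerivAt Real.arccos (-(1 / Real.sqrt (1 - y ^ 2))) y :=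
    Real.hasDerivAt_arccos (by linarith) (by linarith)
  have hmul : HasDerivAt (fun x : ℝ => x * Real.arccos x)
      (1 * Real.arccos y + y * -(1 / Real.sqrt (1 - y ^ 2))) y :=
    (hasDerivAt_id y).mul harccos
  have := ((hsqrt.sub hmul).const_mul (1 / Real.pi))
  refine this.congr_deriv ?_
  have hpi := Real.pi_ne_zero
  field_simp
  ring

lemma G_hasDerivAt {μ x : ℝ} (hμ : 0 < μ) (h1 : -μ < x) (h2 : x < μ) :
    HasDerivAt (G μ) (-(Real.arccos (x/μ)) / Real.pi) x := by
  have hdiv : HasDerivAt (fun x : ℝ => x / μ) (1/μ) x := by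
    simpa using (hasDerivAt_id x).div_const μ
  have h1' : -1 < x / μ := by rw [neg_lt, ← neg_div]; exact (div_lt_one hμ).2 (by linarith)
  have h2' : x / μ < 1 := (div_lt_one hμ).2 h2
  have := ((g_hasDerivAt h1' h2').comp x hdiv).const_mul μ
  refine this.congr_deriv ?_
  field_simp

noncomputable def cc (μ a : ℝ) : ℝ := 1 / (Real.pi * μ * Real.sqrt (1 - (a/μ)^2))
noncomputable def pp (μ a : ℝ) : ℝ := Real.arccos (a/μ) / Real.pi
noncomputable def φ (μ a t : ℝ) : ℝ := -(Real.arccos (t/μ)) / Real.pi - cc μ a * t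

lemma sqrt_pos_of (μ a : ℝ) (hμ : 0 < μ) (ha : 0 ≤ a) (ha' : a < μ) :
    0 < Real.sqrt (1 - (a/μ)^2) := by
  have h1 : a / μ < 1 := (div_lt_one hμ).2 ha'
  have h0 : 0 ≤ a / μ := div_nonneg ha hμ.le
  exact Real.sqrt_pos.2 (by nlinarith)

lemma cc_pos (μ a : ℝ) (hμ : 0 < μ) (ha : 0 ≤ a) (ha' : a < μ) : 0 < cc μ a := by
  have := sqrt_pos_of μ a hμ ha ha'
  have := Real.pi_pos
  unfold cc; positivity

lemma pp_pos (μ a : ℝ) (hμ : 0 < μ) (ha : 0 ≤ a) (ha' : a < μ) : 0 < pp μ a := by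
  have h1 : a / μ < 1 := (div_lt_one hμ).2 ha'
  have := Real.pi_pos
  unfold pp
  exact div_pos (Real.arccos_pos.2 h1) this

lemma negarccos_hasDerivAt {μ t : ℝ} (hμ : 0 < μ) (h1 : -μ < t) (h2 : t < μ) :
    HasDerivAt (fun t => -(Real.arccos (t/μ)) / Real.pi)
      (1 / (Real.pi * μ * Real.sqrt (1 - (t/μ)^2))) t := by
  have h1' : -1 < t / μ := by rw [neg_lt, ← neg_div]; exact (div_lt_one hμ).2 (by linarith)
  have h2' : t / μ < 1 := (div_lt_one hμ).2 h2
  have hdiv : HasDerivAt (fun x : ℝ => x / μ) (1/μ) t := by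
    simpa using (hasDerivAt_id t).div_const μ
  have harccos : HasDerivAt Real.arccos (-(1 / Real.sqrt (1 - (t/μ) ^ 2))) (t/μ) :=
    Real.hasDerivAt_arccos (by linarith) (by linarith)
  have hd := ((harccos.comp t hdiv).neg).div_const Real.pi
  have hs : 0 < Real.sqrt (1 - (t/μ)^2) := Real.sqrt_pos.2 (by nlinarith)
  have hpi := Real.pi_pos
  refine hd.congr_deriv ?_
  field_simp

lemma φ_hasDerivAt {μ a t : ℝ} (hμ : 0 < μ) (h1 : -μ < t) (h2 : t < μ) :
    HasDerivAt (φ μ a) (1 / (Real.pi * μ * Real.sqrt (1 - (t/μ)^2)) - cc μ a) t := by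
  exact (negarccos_hasDerivAt hμ h1 h2).sub (by simpa using (hasDerivAt_id t).const_mul (cc μ a))

lemma φ_mono {μ a b : ℝ} (hμ : 0 < μ) (ha : 0 ≤ a) (hab : a < b) (hb : b ≤ μ) :
    MonotoneOn (φ μ a) (Set.Icc a b) := by
  have hcont : ContinuousOn (φ μ a) (Set.Icc a b) := by
    apply ContinuousOn.sub
    · exact ((Real.continuous_arccos.comp (continuous_id.div_const μ)).neg.div_const
        Real.pi).continuousOn
    · exact (continuous_const.mul continuous_id).continuousOn
  have hint : interior (Set.Icc a b) = Set.Ioo a b := interior_Icc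
  apply monotoneOn_of_deriv_nonneg (convex_Icc a b) hcont
  · intro x hx
    rw [hint] at hx
    exact (φ_hasDerivAt hμ (by cases hx; linarith) (by cases hx; linarith)).differentiableAt.differentiableWithinAt
  · intro x hx
    rw [hint] at hx
    obtain ⟨hx1, hx2⟩ := hx
    rw [(φ_hasDerivAt hμ (by linarith) (by linarith)).deriv]
    have hsa : 0 < Real.sqrt (1 - (a/μ)^2) := sqrt_pos_of μ a hμ ha (by linarith)
    have hst : 0 < Real.sqrt (1 - (x/μ)^2) := sqrt_pos_of μ x hμ (by linarith) (by linarith)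
    have hle : Real.sqrt (1 - (x/μ)^2) ≤ Real.sqrt (1 - (a/μ)^2) := by
      apply Real.sqrt_le_sqrt
      have hxa : a / μ ≤ x / μ := by gcongr
      nlinarith [div_nonneg ha hμ.le]
    have hpi := Real.pi_pos
    rw [sub_nonneg]
    unfold cc
    apply div_le_div_of_nonneg_left one_pos.le (by positivity)
    · apply mul_le_mul_of_nonneg_left hle (by positivity)

lemma G_anti {μ a b : ℝ} (hμ : 0 < μ) (ha : 0 ≤ a) (hab : a < b) (hb : b ≤ μ) :
    AntitoneOn (G μ) (Set.Icc a b) := by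
  apply antitoneOn_of_deriv_nonpos (convex_Icc a b) (G_cont μ).continuousOn
  · intro x hx
    rw [interior_Icc] at hx
    obtain ⟨hx1, hx2⟩ := hx
    exact (G_hasDerivAt hμ (by linarith) (by linarith)).differentiableAt.differentiableWithinAt
  · intro x hx
    rw [interior_Icc] at hx
    obtain ⟨hx1, hx2⟩ := hx
    rw [(G_hasDerivAt hμ (by linarith) (by linarith)).deriv]
    have h2' : x / μ ≤ 1 := by rw [div_le_one hμ]; linarith
    have := Real.arccos_nonneg (x/μ)
    have hpi := Real.pi_pos
    apply div_nonpos_of_nonpos_of_nonneg (by linarith) hpi.le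

lemma fact_iii {μ a b : ℝ} (hμ : 0 < μ) (ha : 0 ≤ a) (hab : a < b) (hb : b ≤ μ) :
    cc μ a * (b - a) ≤ pp μ a := by
  have h := φ_mono hμ ha hab hb (Set.left_mem_Icc.2 hab.le) (Set.right_mem_Icc.2 hab.le) hab.le
  unfold φ at h
  have harc : 0 ≤ Real.arccos (b/μ) := Real.arccos_nonneg _
  have hpi := Real.pi_pos
  unfold pp
  have h2 : -(Real.arccos (b/μ)) / Real.pi ≤ 0 := by
    apply div_nonpos_of_nonpos_of_nonneg (by linarith) hpi.le
  simp only [neg_div] at h h2 ⊢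
  linarith

lemma fact_ii {μ a b : ℝ} (hμ : 0 < μ) (ha : 0 ≤ a) (hab : a < b) (hb : b ≤ μ) :
    G μ a - pp μ a * (b - a) + (cc μ a / 2) * (b - a)^2 ≤ G μ b := by
  set c := cc μ a with hc
  set p := pp μ a with hp
  have hD : MonotoneOn (fun t => G μ t + p * t - (c/2) * (t-a)^2) (Set.Icc a b) := by
    apply monotoneOn_of_deriv_nonneg (convex_Icc a b)
    · exact ((G_cont μ).continuousOn.add (continuous_const.mul continuous_id).continuousOn).sub
        (by fun_prop)
    · intro x hx
      rw [interior_Icc] at hx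
      obtain ⟨hx1, hx2⟩ := hx
      have hG := G_hasDerivAt hμ (show -μ < x by linarith) (by linarith)
      exact ((hG.add (by simpa using (hasDerivAt_id x).const_mul p)).sub
        (by exact (((hasDerivAt_id x).sub_const a).pow 2).const_mul (c/2))).differentiableAt.differentiableWithinAt
    · intro x hx
      rw [interior_Icc] at hx
      obtain ⟨hx1, hx2⟩ := hx
      have hG := G_hasDerivAt hμ (show -μ < x by linarith) (by linarith)
      have hd : HasDerivAt (fun t => G μ t + p * t - (c/2) * (t-a)^2)
          (-(Real.arccos (x/μ)) / Real.pi + p - (c/2) * (2 * (x-a))) x := by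
        have h1 : HasDerivAt (fun t : ℝ => (t - a)^2) (2*(x-a)) x := by
          exact (((hasDerivAt_id x).sub_const a).pow 2).congr_deriv (by simp)
        exact (hG.add (by simpa using (hasDerivAt_id x).const_mul p)).sub
          (by simpa [mul_comm] using h1.const_mul (c/2))
      rw [hd.deriv]
      have hphi := φ_mono hμ ha hab hb (Set.left_mem_Icc.2 hab.le)
        (Set.mem_Icc.2 ⟨hx1.le, hx2.le⟩) hx1.le
      unfold φ at hphi
      have hpe : p = Real.arccos (a/μ) / Real.pi := hp
      rw [hpe]
      simp only [neg_div] at hphi ⊢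
      nlinarith [hphi]
  have := hD (Set.left_mem_Icc.2 hab.le) (Set.right_mem_Icc.2 hab.le) hab.le
  simp only at this
  nlinarith [this]

lemma fact_chord {μ a b : ℝ} (hμ : 0 < μ) (ha : 0 ≤ a) (hab : a < b) (hb : b ≤ μ) :
    ∀ t ∈ Set.Icc a b, G μ t ≤ G μ a + ((G μ b - G μ a)/(b-a)) * (t - a)
      - (cc μ a / 2) * ((t-a)*(b-t)) := by
  set c := cc μ a with hc
  set s := (G μ b - G μ a)/(b-a) with hs
  set Ψ : ℝ → ℝ := fun t => G μ t + (c/2) * ((t-a)*(b-t)) - (G μ a + s*(t-a)) with hΨ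
  have hder : ∀ x ∈ Set.Ioo a b, HasDerivAt Ψ (φ μ a x + ((c/2)*(a+b) - s)) x := by
    intro x hx
    obtain ⟨hx1, hx2⟩ := hx
    have hG := G_hasDerivAt hμ (show -μ < x by linarith) (by linarith)
    have hq : HasDerivAt (fun t : ℝ => (t-a)*(b-t)) (b - x + (a - x)) x := by
      have := (((hasDerivAt_id x).sub_const a).mul ((hasDerivAt_id x).const_sub b))
      exact this.congr_deriv (by simp only [id]; ring)
    have hl : HasDerivAt (fun t : ℝ => G μ a + s*(t-a)) s x := by
      simpa using (((hasDerivAt_id x).sub_const a).const_mul s).const_add (G μ a)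
    have := (hG.add (hq.const_mul (c/2))).sub hl
    refine this.congr_deriv ?_
    unfold φ
    rw [← hc]
    ring
  have hconv : ConvexOn ℝ (Set.Icc a b) Ψ := by
    apply MonotoneOn.convexOn_of_deriv (convex_Icc a b)
    · apply ContinuousOn.sub
      · exact (G_cont μ).continuousOn.add (by fun_prop)
      · fun_prop
    · intro x hx
      rw [interior_Icc] at hx
      exact (hder x hx).differentiableAt.differentiableWithinAt
    · rw [interior_Icc]
      intro x hx y hy hxy
      rw [(hder x hx).deriv, (hder y hy).deriv]
      have := φ_mono hμ ha hab hb (Set.mem_Icc.2 ⟨hx.1.le, hx.2.le⟩)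
        (Set.mem_Icc.2 ⟨hy.1.le, hy.2.le⟩) hxy
      linarith
  have hΨa : Ψ a = 0 := by simp [hΨ]
  have hΨb : Ψ b = 0 := by
    have hba : b - a ≠ 0 := by linarith
    simp only [hΨ, hs]
    field_simp
    ring
  intro t ht
  have := hconv.le_on_segment (Set.left_mem_Icc.2 hab.le) (Set.right_mem_Icc.2 hab.le)
    (by rwa [segment_eq_Icc hab.le])
  rw [hΨa, hΨb] at this
  simp only [max_self] at this
  have : Ψ t ≤ 0 := this
  simp only [hΨ] at this
  linarith

lemma fact_int {μ a b : ℝ} (hμ : 0 < μ) (ha : 0 ≤ a) (hab : a < b) (hb : b ≤ μ) :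
    ∫ t in a..b, G μ t ≤ (b-a)*(G μ a + G μ b)/2 - cc μ a * (b-a)^3 / 12 := by
  set c := cc μ a with hc
  set A := G μ a with hA
  set B := G μ b with hB
  set s := (B - A)/(b-a) with hs
  set u : ℝ → ℝ := fun t => A + s * (t - a) - (c/2) * ((a+b)*t - t^2 - a*b) with hu
  have hu' : ∀ t ∈ Set.Icc a b, G μ t ≤ u t := by
    intro t ht
    have := fact_chord hμ ha hab hb t ht
    simp only [hu]
    rw [← hc, ← hA, ← hB, ← hs] at this
    nlinarith [this]
  have hcont_u : Continuous u := by fun_prop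
  have hmono : ∫ t in a..b, G μ t ≤ ∫ t in a..b, u t := by
    apply intervalIntegral.integral_mono_on hab.le
    · exact (G_cont μ).intervalIntegrable a b
    · exact hcont_u.intervalIntegrable a b
    · exact hu'
  set F : ℝ → ℝ := fun t => A*t + (s/2)*(t-a)^2 - (c/2)*((a+b)*t^2/2 - t^3/3 - a*b*t) with hF
  have hFd : ∀ t, HasDerivAt F (u t) t := by
    intro t
    have h1 : HasDerivAt (fun t : ℝ => A*t) A t := by
      simpa using (hasDerivAt_id t).const_mul A
    have h2 : HasDerivAt (fun t : ℝ => (s/2)*(t-a)^2) ((s/2)*(2*(t-a))) t := by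
      have h := ((hasDerivAt_id t).sub_const a).pow 2
      simpa using h.const_mul (s/2)
    have h3 : HasDerivAt (fun t : ℝ => (a+b)*t^2/2 - t^3/3 - a*b*t)
        ((a+b)*(2*t)/2 - (3*t^2)/3 - a*b) t := by
      have p2 : HasDerivAt (fun t : ℝ => (a+b)*t^2/2) ((a+b)*(2*t)/2) t := by
        simpa [mul_comm, mul_div_assoc] using ((hasDerivAt_pow 2 t).const_mul (a+b)).div_const 2
      have p3 : HasDerivAt (fun t : ℝ => t^3/3) ((3*t^2)/3) t := by
        simpa using (hasDerivAt_pow 3 t).div_const 3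
      have p4 : HasDerivAt (fun t : ℝ => a*b*t) (a*b) t := by
        simpa using (hasDerivAt_id t).const_mul (a*b)
      exact (p2.sub p3).sub p4
    have := (h1.add h2).sub (h3.const_mul (c/2))
    refine this.congr_deriv ?_
    simp only [hu]
    ring
  have hieq : ∫ t in a..b, u t = F b - F a :=
    intervalIntegral.integral_eq_sub_of_hasDerivAt (fun t _ => hFd t)
      (hcont_u.intervalIntegrable a b)
  have hval : F b - F a = (b-a)*(A + B)/2 - c * (b-a)^3 / 12 := by
    have hba : b - a ≠ 0 := by linarith
    simp only [hF, hs]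
    field_simp
    ring
  rw [hieq, hval] at hmono
  exact hmono

lemma arith_key (u v w : ℝ) (hv : 0 < v) (hvu : v ≤ u) (hw1 : 1/4 ≤ w)
    (hw2 : 3/4 - u/2 + v/4 ≤ w) : u/(4*u - v) ≤ w + v/12 := by
  have hu : 0 < u := lt_of_lt_of_le hv hvu
  have hden : 0 < 4*u - v := by linarith
  rw [div_le_iff₀ hden]
  rcases le_or_gt ((3+v)/4) u with h | h
  · nlinarith [mul_nonneg hv.le (by linarith : (0:ℝ) ≤ 4*u - 3 - v),
      mul_nonneg (by linarith : (0:ℝ) ≤ w - 1/4) hden.le]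
  · have hv1 : v ≤ 1 := by linarith
    nlinarith [mul_nonneg (by linarith : (0:ℝ) ≤ u - v) (by linarith : (0:ℝ) ≤ 3 + v - 4*u),
      mul_nonneg (by linarith : (0:ℝ) ≤ w - (3/4 - u/2 + v/4)) hden.le,
      mul_nonneg hv.le (by linarith : (0:ℝ) ≤ 1 - v)]

lemma final_arith (d c p A B nr I : ℝ) (hdpos : 0 < d) (hcpos : 0 < c) (hppos : 0 < p)
    (hIII : c*d ≤ p) (hII : A - p*d + (c/2)*d^2 ≤ B) (hInt : I ≤ d*(A+B)/2 - c*d^3/12)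
    (hAlt : A < nr + 1/4) (hBlt : B < nr - 3/4) :
    I + d*p/(4*p - c*d) ≤ d*nr := by
  set u := p * d with hu
  set v := c * d^2 with hv
  set w := nr - (A+B)/2 with hw
  have hvpos : 0 < v := mul_pos hcpos (pow_pos hdpos 2)
  have hvu : v ≤ u := by
    rw [hu, hv]
    nlinarith [mul_le_mul_of_nonneg_right hIII hdpos.le]
  have hw1 : 1/4 ≤ w := by rw [hw]; linarith
  have hw2 : 3/4 - u/2 + v/4 ≤ w := by rw [hw, hu, hv]; nlinarith
  have hkey : u/(4*u - v) ≤ w + v/12 := arith_key u v w hvpos hvu hw1 hw2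
  have h4uv : 0 < 4*u - v := by rw [hu, hv]; nlinarith
  have h4p : 0 < 4*p - c*d := by linarith
  have he : d*p/(4*p - c*d) = d*(u/(4*u - v)) := by
    rw [hu, hv, show 4*(p*d) - c*d^2 = d*(4*p - c*d) by ring]
    field_simp [hdpos.ne', h4p.ne']
  have hfrac2 : d*p/(4*p - c*d) ≤ d*(w + v/12) := by
    rw [he]
    exact mul_le_mul_of_nonneg_left hkey hdpos.le
  have hwd : d*(w + v/12) = d*nr - d*(A+B)/2 + c*d^3/12 := by
    rw [hw, hv]; ring
  linarith

/-- Lemma 2.4: for `i,j ∈ ℕ` with `0 ≤ i < j ≤ μ`, if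
`n + 1/4 > G_μ(i)`, `G_μ(m) ≥ n − 3/4` for every integer `i ≤ m ≤ j−1`, and
`n − 3/4 > G_μ(j) ≥ n − 7/4` for some `n ∈ ℤ`, then
`T(G_μ + 3/4, i, j) ≥ ∫_i^j G_μ(t) dt + (j−i)/(2(2−Θ)) − 1/2` with `Θ = Θ(i,j,μ)`. -/
theorem stmt2 (μ : ℝ) (i j : ℕ) (hμ : 0 < μ) (hij : i < j) (hj : (j : ℝ) ≤ μ)
    (n : ℤ)
    (h1 : (n : ℝ) + 1 / 4 > G μ i)
    (h2 : ∀ m : ℕ, i ≤ m → m < j → G μ m ≥ (n : ℝ) - 3 / 4)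
    (h3 : (n : ℝ) - 3 / 4 > G μ j)
    (h4 : G μ j ≥ (n : ℝ) - 7 / 4) :
    trapT (fun t => G μ t + 3 / 4) i j ≥
      (∫ t in (i : ℝ)..(j : ℝ), G μ t) + ((j : ℝ) - (i : ℝ)) / (2 * (2 - Θ i j μ)) - 1 / 2 := by
  set a : ℝ := (i : ℝ) with haa
  set b : ℝ := (j : ℝ) with hbb
  have ha : 0 ≤ a := Nat.cast_nonneg i
  have hab : a < b := by rw [haa, hbb]; exact_mod_cast hij
  have ha' : a < μ := lt_of_lt_of_le hab hj
  set c := cc μ a with hc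
  set p := pp μ a with hp
  set A := G μ a with hA
  set B := G μ b with hB
  have hcpos : 0 < c := cc_pos μ a hμ ha ha'
  have hppos : 0 < p := pp_pos μ a hμ ha ha'
  set d := b - a with hd
  have hdpos : 0 < d := by linarith
  have hd1 : 1 ≤ d := by
    rw [hd, haa, hbb]
    have : (i:ℝ) + 1 ≤ j := by exact_mod_cast hij
    linarith
  -- basic value bounds
  have hAge : (n:ℝ) - 3/4 ≤ A := h2 i le_rfl hij
  have hAlt : A < (n:ℝ) + 1/4 := h1
  have hBlt : B < (n:ℝ) - 3/4 := h3
  have hBge : (n:ℝ) - 7/4 ≤ B := h4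
  -- floor values
  have hfloori : ⌊G μ a + 3/4⌋ = n := by
    rw [Int.floor_eq_iff]
    constructor <;> push_cast <;> [linarith; linarith]
  have hfloorj : ⌊G μ b + 3/4⌋ = n - 1 := by
    rw [Int.floor_eq_iff]
    constructor <;> push_cast <;> [linarith; linarith]
  have hfloorm : ∀ m ∈ Finset.Ioo (i : ℤ) (j : ℤ), ⌊G μ (m:ℝ) + 3/4⌋ = n := by
    intro m hm
    rw [Finset.mem_Ioo] at hm
    obtain ⟨him, hmj⟩ := hm
    have hm0 : (0:ℤ) ≤ m := by omega
    have hmr : ((m.toNat : ℕ) : ℝ) = (m : ℝ) := by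
      rw [show ((m.toNat : ℕ) : ℝ) = ((m.toNat : ℤ) : ℝ) by push_cast; ring,
        Int.toNat_of_nonneg hm0]
    have hlow : (n:ℝ) - 3/4 ≤ G μ (m:ℝ) := by
      rw [← hmr]; exact h2 m.toNat (by omega) (by omega)
    have hmem : (m:ℝ) ∈ Set.Icc a b := by
      constructor
      · rw [haa]; exact_mod_cast him.le
      · rw [hbb]; exact_mod_cast hmj.le
    have hup : G μ (m:ℝ) ≤ A :=
      G_anti hμ ha hab hj (Set.left_mem_Icc.2 hab.le) hmem hmem.1
    rw [Int.floor_eq_iff]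
    constructor <;> push_cast <;> [linarith; linarith]
  -- trapT value
  have hcard : ((Finset.Ioo (i:ℤ) (j:ℤ)).card : ℝ) = d - 1 := by
    rw [Int.card_Ioo]
    rw [show ((((j:ℤ) - i - 1).toNat : ℕ) : ℝ) = ((((j:ℤ) - i - 1).toNat : ℤ) : ℝ) from by push_cast; ring]
    rw [Int.toNat_of_nonneg (by omega)]
    rw [hd, haa, hbb]
    push_cast
    ring
  have hsum : ∑ m ∈ Finset.Ioo (i:ℤ) (j:ℤ), ((⌊G μ (m:ℝ) + 3/4⌋ : ℤ) : ℝ) = (d-1) * n := by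
    have hcg : ∀ m ∈ Finset.Ioo (i:ℤ) (j:ℤ), ((⌊G μ (m:ℝ) + 3/4⌋ : ℤ) : ℝ) = ((n:ℤ):ℝ) :=
      fun m hm => by rw [hfloorm m hm]
    rw [Finset.sum_congr rfl hcg, Finset.sum_const, nsmul_eq_mul, hcard]
  have htrap : trapT (fun t => G μ t + 3 / 4) i j = d * n - 1/2 := by
    simp only [trapT]
    rw [show (((i:ℤ)):ℝ) = a by norm_cast, show (((j:ℤ)):ℝ) = b by norm_cast,
      hfloori, hfloorj, hsum]
    push_cast
    ring
  -- Θ identity and fraction rewriting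
  have hS : 0 < Real.sqrt (1 - (a/μ)^2) := sqrt_pos_of μ a hμ ha ha'
  have harc : 0 < Real.arccos (a/μ) := Real.arccos_pos.2 ((div_lt_one hμ).2 ha')
  have hpi := Real.pi_pos
  have hΘ : Θ a b μ = c * d / (2 * p) := by
    rw [hc, hp]
    unfold Θ cc pp
    rw [← hd]
    set S := Real.sqrt (1 - (a/μ)^2) with hSS
    set R := Real.arccos (a/μ) with hRR
    field_simp
  have hIII : c * d ≤ p := fact_iii hμ ha hab hj
  have hII : A - p * d + (c/2) * d^2 ≤ B := fact_ii hμ ha hab hj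
  have hInt : ∫ t in a..b, G μ t ≤ d*(A + B)/2 - c * d^3 / 12 := fact_int hμ ha hab hj
  have h4p : 0 < 4*p - c*d := by linarith
  have hfrac : d / (2*(2 - Θ a b μ)) = d*p/(4*p - c*d) := by
    rw [hΘ]
    rw [show 2*(2 - c*d/(2*p)) = (4*p - c*d)/p by field_simp; ring]
    rw [div_div_eq_mul_div]
  have hfin : (∫ t in a..b, G μ t) + d*p/(4*p - c*d) ≤ d*(n:ℝ) :=
    final_arith d c p A B (n:ℝ) _ hdpos hcpos hppos hIII hII hInt hAlt hBlt
  rw [htrap, hfrac]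
  linarith
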